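/- Let γ ∈ SL_n(ℝ) with singular value decomposition γ = k a k′, where k, k′ ∈ SO(n) and a = diag(a₁,…,a_n) with a₁ ≥ a₂ ≥ ⋯ ≥ a_n > 0. Let 0 < ε < 1/4 and suppose a₂/a₁ ≤ ε². Let H_γ be the projective hyperplane spanned by {k′⁻¹(e_i)}_{i=2}^n and v_γ = [k(e₁)]. Then γ maps the complement of the ε-neighborhood of H_γ in P^{n−1}(ℝ) into the ε-ball around v_γ; that is, for any nonzero v with d([v], H_γ) ≥ ε, one has d([γv], v_γ) ≤ ε. -/
import Mathlib


open scoped BigOperators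

noncomputable def nrm {n : ℕ} (v : Fin n → ℝ) : ℝ := Real.sqrt (∑ i, v i ^ 2)

noncomputable def wedgeSq {n : ℕ} (v w : Fin n → ℝ) : ℝ :=
  ∑ i, ∑ j, if i < j then (v i * w j - v j * w i) ^ 2 else 0

noncomputable def pd {n : ℕ} (v w : Fin n → ℝ) : ℝ :=
  Real.sqrt (wedgeSq v w) / (nrm v * nrm w)

lemma lagrange {n : ℕ} (v w : Fin n → ℝ) :
    (∑ i, ∑ j, if i < j then (v i * w j - v j * w i) ^ 2 else 0)
      = (∑ i, v i ^ 2) * (∑ i, w i ^ 2) - (∑ i, v i * w i) ^ 2 := by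
  have key : ∀ i j : Fin n, (v i * w j - v j * w i) ^ 2
      = (if i < j then (v i * w j - v j * w i) ^ 2 else 0)
        + (if j < i then (v i * w j - v j * w i) ^ 2 else 0) := by
    intro i j
    rcases lt_trichotomy i j with h | h | h
    · simp [h, not_lt_of_gt h]
    · subst h; simp
    · simp [h, not_lt_of_gt h]
  have full : ∑ i, ∑ j, (v i * w j - v j * w i) ^ 2
      = 2 * ∑ i, ∑ j, if i < j then (v i * w j - v j * w i) ^ 2 else 0 := by
    have h1 : ∑ i, ∑ j, (v i * w j - v j * w i) ^ 2
        = (∑ i, ∑ j, if i < j then (v i * w j - v j * w i) ^ 2 else 0)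
          + ∑ i, ∑ j, if j < i then (v i * w j - v j * w i) ^ 2 else 0 := by
      rw [← Finset.sum_add_distrib]
      refine Finset.sum_congr rfl fun i _ => ?_
      rw [← Finset.sum_add_distrib]
      exact Finset.sum_congr rfl fun j _ => key i j
    have h2 : (∑ i, ∑ j, if j < i then (v i * w j - v j * w i) ^ 2 else 0)
        = ∑ i, ∑ j, if i < j then (v i * w j - v j * w i) ^ 2 else 0 := by
      rw [Finset.sum_comm]
      refine Finset.sum_congr rfl fun i _ => Finset.sum_congr rfl fun j _ => ?_
      congr 1
      ring
    rw [h1, h2]; ring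
  have expand : ∑ i, ∑ j, (v i * w j - v j * w i) ^ 2
      = 2 * ((∑ i, v i ^ 2) * (∑ i, w i ^ 2) - (∑ i, v i * w i) ^ 2) := by
    have e1 : (∑ i, v i ^ 2) * (∑ j, w j ^ 2) = ∑ i, ∑ j, v i ^ 2 * w j ^ 2 :=
      Finset.sum_mul_sum _ _ _ _
    have e2 : (∑ i, w i ^ 2) * (∑ j, v j ^ 2) = ∑ i, ∑ j, w i ^ 2 * v j ^ 2 :=
      Finset.sum_mul_sum _ _ _ _
    have e3 : (∑ i, v i * w i) * (∑ j, v j * w j) = ∑ i, ∑ j, (v i * w i) * (v j * w j) :=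
      Finset.sum_mul_sum _ _ _ _
    have : ∑ i, ∑ j, (v i * w j - v j * w i) ^ 2
        = ∑ i, ∑ j, (v i ^ 2 * w j ^ 2 + w i ^ 2 * v j ^ 2 - 2 * ((v i * w i) * (v j * w j))) := by
      refine Finset.sum_congr rfl fun i _ => Finset.sum_congr rfl fun j _ => by ring
    rw [this]
    simp only [Finset.sum_sub_distrib, Finset.sum_add_distrib, ← Finset.mul_sum,
      ← Finset.sum_mul]
    ring
  nlinarith [full, expand]

lemma dot_orth {n : ℕ} (k : Matrix (Fin n) (Fin n) ℝ) (hk : k.transpose * k = 1)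
    (x y : Fin n → ℝ) : ∑ i, (k.mulVec x i) * (k.mulVec y i) = ∑ i, x i * y i := by
  have : dotProduct (k.mulVec x) (k.mulVec y) = dotProduct x y := by
    rw [Matrix.dotProduct_mulVec, ← Matrix.mulVec_transpose, Matrix.mulVec_mulVec, hk,
      Matrix.one_mulVec]
  exact this

/-- Breuillard–Gelander Proposition 3.1: if `γ = k a k' ∈ SL_n(ℝ)` with
`a = diag(a₁ ≥ ⋯ ≥ a_n > 0)` and `a₂/a₁ ≤ ε²` with `0 < ε < 1/4`, then `γ` maps the
complement of the `ε`-neighborhood of the repelling hyperplane `H_γ` (spanned by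
`k'⁻¹ e_i`, `i ≥ 2`; the distance from `[v]` to `H_γ` is `|(k' v)₁|/‖v‖`) into the
`ε`-ball around `v_γ = [k e₁]`. -/
theorem eps_contracting_of_singular_gap {n : ℕ} (hn : 2 ≤ n)
    (k k' : Matrix (Fin n) (Fin n) ℝ)
    (hk : k.transpose * k = 1) (hkdet : k.det = 1)
    (hk' : k'.transpose * k' = 1) (hk'det : k'.det = 1)
    (a : Fin n → ℝ) (ha_pos : ∀ i, 0 < a i) (ha_mono : ∀ i j : Fin n, i ≤ j → a j ≤ a i)
    (ha_det : ∏ i, a i = 1)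
    (γ : Matrix (Fin n) (Fin n) ℝ) (hγ : γ = k * Matrix.diagonal a * k')
    (ε : ℝ) (hε0 : 0 < ε) (hε : ε < 1 / 4)
    (hgap : a ⟨1, by omega⟩ / a ⟨0, by omega⟩ ≤ ε ^ 2)
    (v : Fin n → ℝ) (hv : v ≠ 0)
    (hfar : ε ≤ |(k'.mulVec v) ⟨0, by omega⟩| / nrm v) :
    pd (γ.mulVec v) (k.mulVec (fun i => if i = ⟨0, by omega⟩ then 1 else 0)) ≤ ε := by
  classical
  set i0 : Fin n := ⟨0, by omega⟩ with hi0
  set i1 : Fin n := ⟨1, by omega⟩ with hi1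
  set w : Fin n → ℝ := k'.mulVec v with hwdef
  set x : Fin n → ℝ := fun i => a i * w i with hxdef
  set e : Fin n → ℝ := fun i => if i = i0 then 1 else 0 with hedef
  have hdw : (Matrix.diagonal a).mulVec w = x := by
    ext i; simp [Matrix.mulVec_diagonal, hxdef]
  have hx : γ.mulVec v = k.mulVec x := by
    rw [hγ, ← hdw, hwdef, Matrix.mulVec_mulVec, Matrix.mulVec_mulVec]
  -- sums
  have he2 : ∑ i, e i ^ 2 = 1 := by
    have : ∀ i, e i ^ 2 = if i = i0 then 1 else 0 := by
      intro i; by_cases h : i = i0 <;> simp [hedef, h]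
    simp [Finset.sum_congr rfl fun i _ => this i]
  have hxe : ∑ i, x i * e i = x i0 := by
    have : ∀ i, x i * e i = if i = i0 then x i0 else 0 := by
      intro i; by_cases h : i = i0 <;> simp [hedef, h]
    simp [Finset.sum_congr rfl fun i _ => this i]
  have hkx2 : ∑ i, (k.mulVec x) i ^ 2 = ∑ i, x i ^ 2 := by
    simpa [sq] using dot_orth k hk x x
  have hke2 : ∑ i, (k.mulVec e) i ^ 2 = 1 := by
    rw [← he2]; simpa [sq] using dot_orth k hk e e
  have hkxe : ∑ i, (k.mulVec x) i * (k.mulVec e) i = x i0 := by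
    rw [← hxe]; exact dot_orth k hk x e
  have hw2 : ∑ i, w i ^ 2 = ∑ i, v i ^ 2 := by
    simpa [sq] using dot_orth k' hk' v v
  -- positivity of ‖v‖
  have hSv_pos : 0 < ∑ i, v i ^ 2 := by
    obtain ⟨i, hi⟩ := Function.ne_iff.mp hv
    exact lt_of_lt_of_le (pow_two_pos_of_ne_zero hi)
      (Finset.single_le_sum (fun j _ => sq_nonneg (v j)) (Finset.mem_univ i))
  have hnrmv : (0:ℝ) < nrm v := Real.sqrt_pos.mpr hSv_pos
  have hw0 : ε * Real.sqrt (∑ i, w i ^ 2) ≤ |w i0| := by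
    rw [hw2]
    exact (le_div_iff₀ hnrmv).mp hfar
  have hsw_nonneg : (0:ℝ) ≤ Real.sqrt (∑ i, w i ^ 2) := Real.sqrt_nonneg _
  have hsw_pos : 0 < Real.sqrt (∑ i, w i ^ 2) := by rw [hw2]; exact hnrmv
  have hw0_pos : 0 < |w i0| := lt_of_lt_of_le (by positivity) hw0
  -- compute pd
  have hwedge : wedgeSq (k.mulVec x) (k.mulVec e) = (∑ i, x i ^ 2) * 1 - (x i0) ^ 2 := by
    rw [wedgeSq, lagrange, hkx2, hke2, hkxe]
  have hnrm1 : nrm (k.mulVec x) = Real.sqrt (∑ i, x i ^ 2) := by rw [nrm, hkx2]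
  have hnrm2 : nrm (k.mulVec e) = 1 := by rw [nrm, hke2, Real.sqrt_one]
  have hpd : pd (γ.mulVec v) (k.mulVec e)
      = Real.sqrt ((∑ i, x i ^ 2) - (x i0) ^ 2) / Real.sqrt (∑ i, x i ^ 2) := by
    rw [hx, pd, hwedge, hnrm1, hnrm2, mul_one, mul_one]
  -- bound the numerator
  have ha1i : ∀ i : Fin n, i ≠ i0 → a i ≤ a i1 := by
    intro i hi
    refine ha_mono i1 i ?_
    have : (1:ℕ) ≤ i.val := by
      rcases Nat.eq_zero_or_pos i.val with h | h
      · exact absurd (Fin.ext h) hi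
      · exact h
    exact this
  have hA : (∑ i, x i ^ 2) - (x i0) ^ 2 ≤ a i1 ^ 2 * ∑ i, w i ^ 2 := by
    have split : ∑ i, x i ^ 2 = x i0 ^ 2 + ∑ i ∈ Finset.univ.erase i0, x i ^ 2 :=
      (Finset.add_sum_erase _ _ (Finset.mem_univ i0)).symm
    rw [split]
    have step1 : ∑ i ∈ Finset.univ.erase i0, x i ^ 2
        ≤ ∑ i ∈ Finset.univ.erase i0, a i1 ^ 2 * w i ^ 2 := by
      refine Finset.sum_le_sum fun i hi => ?_
      have hi' : i ≠ i0 := Finset.ne_of_mem_erase hi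
      have : x i ^ 2 = a i ^ 2 * w i ^ 2 := by rw [hxdef]; ring
      rw [this]
      exact mul_le_mul_of_nonneg_right
        (pow_le_pow_left₀ (ha_pos i).le (ha1i i hi') 2) (sq_nonneg _)
    have step2 : ∑ i ∈ Finset.univ.erase i0, a i1 ^ 2 * w i ^ 2
        ≤ a i1 ^ 2 * ∑ i, w i ^ 2 := by
      rw [← Finset.mul_sum]
      refine mul_le_mul_of_nonneg_left ?_ (sq_nonneg _)
      exact Finset.sum_le_sum_of_subset_of_nonneg (Finset.subset_univ _)
        (fun i _ _ => sq_nonneg _)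
    linarith
  -- bound the denominator from below
  have hB : a i0 * |w i0| ≤ Real.sqrt (∑ i, x i ^ 2) := by
    have h1 : a i0 * |w i0| = |x i0| := by
      rw [hxdef, abs_mul, abs_of_pos (ha_pos i0)]
    have h2 : x i0 ^ 2 ≤ ∑ i, x i ^ 2 :=
      Finset.single_le_sum (fun j _ => sq_nonneg (x j)) (Finset.mem_univ i0)
    rw [h1, ← Real.sqrt_sq_eq_abs]
    exact Real.sqrt_le_sqrt h2
  have hdenpos : 0 < a i0 * |w i0| := mul_pos (ha_pos i0) hw0_pos
  have hgap' : a i1 ≤ ε ^ 2 * a i0 := by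
    rw [div_le_iff₀ (ha_pos i0)] at hgap
    linarith
  -- final chain
  rw [hpd]
  calc Real.sqrt ((∑ i, x i ^ 2) - x i0 ^ 2) / Real.sqrt (∑ i, x i ^ 2)
      ≤ Real.sqrt (a i1 ^ 2 * ∑ i, w i ^ 2) / (a i0 * |w i0|) :=
        div_le_div₀ (Real.sqrt_nonneg _) (Real.sqrt_le_sqrt hA) hdenpos hB
    _ = a i1 * Real.sqrt (∑ i, w i ^ 2) / (a i0 * |w i0|) := by
        rw [Real.sqrt_mul (sq_nonneg _), Real.sqrt_sq (ha_pos i1).le]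
    _ ≤ ε := by
        rw [div_le_iff₀ hdenpos]
        nlinarith [hw0, hgap', hsw_nonneg, hε0.le, (ha_pos i0).le, (ha_pos i1).le]
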